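/- Let G_1 and G_2 be two infinite roughly isometric networks with conductances c_1 and c_2. If c_1, c_2, c_1^{-1}, c_2^{-1} are all bounded and the vertex degrees in G_1 and G_2 are all bounded, then G_1 is roughly equivalent to G_2. -/

import Mathlib

open scoped ENNReal

/- STATEMENT 4: Two infinite roughly isometric networks with conductances c₁, c₂ such
that c₁, c₂, c₁⁻¹, c₂⁻¹ are bounded and all degrees are bounded, are roughly
equivalent (there are rough embeddings in both directions). -/

/-- `φ` is a rough isometry from `(G, dist)` to `(H, dist)`. -/
def IsRoughIsometry {V W : Type*} (G : SimpleGraph V) (H : SimpleGraph W)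
    (φ : V → W) : Prop :=
  ∃ α : ℝ, 0 < α ∧ ∃ β : ℝ, 0 ≤ β ∧
    (∀ x y : V, α⁻¹ * (G.dist x y : ℝ) - β ≤ (H.dist (φ x) (φ y) : ℝ) ∧
      ((H.dist (φ x) (φ y) : ℝ) ≤ α * (G.dist x y : ℝ) + β)) ∧
    ∀ w : W, ∃ x : V, ((H.dist w (φ x) : ℝ) ≤ β)

/-- The sum of the resistances `r₂` along (the oriented edges of) a walk. -/
noncomputable def pathResistance {W : Type*} {G : SimpleGraph W}
    (r₂ : W → W → ℝ≥0∞) {u v : W} (w : G.Walk u v) : ℝ≥0∞ :=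
  (w.darts.map (fun d => r₂ d.toProd.1 d.toProd.2)).sum

/-- `φ`, together with the path assignment `Φ`, is a rough embedding from the
network `(G₁, r₁)` to the network `(G₂, r₂)` (resistances). -/
def IsRoughEmbedding {V W : Type*} (G₁ : SimpleGraph V) (G₂ : SimpleGraph W)
    (r₁ : V → V → ℝ≥0∞) (r₂ : W → W → ℝ≥0∞) (φ : V → W)
    (Φ : ∀ ⦃x y : V⦄, G₁.Adj x y → G₂.Walk (φ x) (φ y)) : Prop :=
  (∀ ⦃x y : V⦄ (h : G₁.Adj x y), (Φ h).IsPath ∧ 0 < (Φ h).length) ∧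
  (∀ ⦃x y : V⦄ (h : G₁.Adj x y), Φ h.symm = (Φ h).reverse) ∧
  (∃ a : ℝ≥0∞, a ≠ ∞ ∧ ∀ ⦃x y : V⦄ (h : G₁.Adj x y),
    pathResistance r₂ (Φ h) ≤ a * r₁ x y) ∧
  (∃ b : ℕ, ∀ e₂ : Sym2 W,
    {pr : V × V | ∃ h : G₁.Adj pr.1 pr.2, e₂ ∈ (Φ h).edges}.Finite ∧
    {pr : V × V | ∃ h : G₁.Adj pr.1 pr.2, e₂ ∈ (Φ h).edges}.ncard ≤ b)

set_option linter.unusedSectionVars false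
set_option linter.unusedVariables false
set_option maxHeartbeats 1000000

namespace RoughAux

open SimpleGraph Finset

variable {V : Type*} [DecidableEq V] (G : SimpleGraph V)

noncomputable def cover [G.LocallyFinite] (v : V) : ℕ → Finset V
  | 0 => {v}
  | n+1 => (cover v n).biUnion (fun u => insert u (G.neighborFinset u))

lemma cover_card [G.LocallyFinite] (D : ℕ) (hD : ∀ v, G.degree v ≤ D) (v : V) (n : ℕ) :
    (cover G v n).card ≤ (D+1)^n := by
  induction n with
  | zero => simp [cover]
  | succ n ih =>
    calc (cover G v (n+1)).card
        ≤ ∑ u ∈ cover G v n, (insert u (G.neighborFinset u)).card := Finset.card_biUnion_le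
      _ ≤ ∑ _u ∈ cover G v n, (D+1) := by
          refine Finset.sum_le_sum (fun u _ => ?_)
          refine (Finset.card_insert_le _ _).trans ?_
          have : (G.neighborFinset u).card ≤ D := hD u
          omega
      _ = (cover G v n).card * (D+1) := by simp [Finset.sum_const, Nat.smul_one_eq_cast, mul_comm]
      _ ≤ (D+1)^n * (D+1) := Nat.mul_le_mul_right _ ih
      _ = (D+1)^(n+1) := (pow_succ _ _).symm

lemma subset_cover_succ [G.LocallyFinite] (v : V) (n : ℕ) :
    cover G v n ⊆ cover G v (n+1) :=
  fun u hu => Finset.mem_biUnion.mpr ⟨u, hu, Finset.mem_insert_self u _⟩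

lemma mem_cover [G.LocallyFinite] (hc : G.Connected) (v : V) (n : ℕ) :
    ∀ x, G.dist v x ≤ n → x ∈ cover G v n := by
  induction n with
  | zero =>
    intro x hx
    have : x = v := (hc.dist_eq_zero_iff.mp (Nat.le_zero.mp hx)).symm
    simp [cover, this]
  | succ n ih =>
    intro x hx
    rcases Nat.lt_or_ge (G.dist v x) (n+1) with h' | h'
    · exact subset_cover_succ _ _ _ (ih x (Nat.lt_succ_iff.mp h'))
    · have hdist : G.dist v x = n+1 := le_antisymm hx h'
      have hxv : x ≠ v := by
        intro e; subst e; rw [SimpleGraph.dist_comm, SimpleGraph.dist_self] at hdist; omega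
      obtain ⟨p, hp⟩ := hc.exists_walk_length_eq_dist v x
      obtain ⟨u, hadj, q, hq⟩ := SimpleGraph.Walk.exists_eq_cons_of_ne hxv p.reverse
      have hqlen : q.length = n := by
        have h1 : p.reverse.length = n + 1 := by rw [SimpleGraph.Walk.length_reverse, hp, hdist]
        rw [hq, SimpleGraph.Walk.length_cons] at h1
        omega
      have hu : G.dist v u ≤ n := by
        have := SimpleGraph.dist_le q.reverse
        rwa [SimpleGraph.Walk.length_reverse, hqlen] at this
      exact Finset.mem_biUnion.mpr ⟨u, ih u hu,
        Finset.mem_insert.mpr (Or.inr (by simpa using hadj.symm))⟩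

lemma exists_adj_dist (hc : G.Connected) {w x : V} {m : ℕ} (h : G.dist w x = m+1) :
    ∃ u, G.Adj u x ∧ G.dist w u = m := by
  have hxw : x ≠ w := by
    intro e; subst e; rw [SimpleGraph.dist_comm, SimpleGraph.dist_self] at h; omega
  obtain ⟨p, hp⟩ := hc.exists_walk_length_eq_dist w x
  obtain ⟨u, hadj, q, hq⟩ := SimpleGraph.Walk.exists_eq_cons_of_ne hxw p.reverse
  have hqlen : q.length = m := by
    have h1 : p.reverse.length = m + 1 := by rw [SimpleGraph.Walk.length_reverse, hp, h]
    rw [hq, SimpleGraph.Walk.length_cons] at h1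
    omega
  have hle : G.dist w u ≤ m := by
    have := SimpleGraph.dist_le q.reverse
    rwa [SimpleGraph.Walk.length_reverse, hqlen] at this
  have hge : m ≤ G.dist w u := by
    have htri := hc.dist_triangle (u := w) (v := u) (w := x)
    have hd1 : G.dist u x ≤ 1 := by
      have := SimpleGraph.dist_le (SimpleGraph.Walk.cons hadj.symm SimpleGraph.Walk.nil)
      simpa using this
    omega
  exact ⟨u, hadj.symm, le_antisymm hle hge⟩

lemma exists_dist_eq [Infinite V] [G.LocallyFinite] (hc : G.Connected) (w : V) (n : ℕ) :
    ∃ x, G.dist w x = n := by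
  have key : ∀ (m k : ℕ), k ≤ m → ∀ x, G.dist w x = m → ∃ u, G.dist w u = k := by
    intro m
    induction m with
    | zero => intro k hk x hx; exact ⟨x, by omega⟩
    | succ m ih =>
      intro k hk x hx
      rcases Nat.eq_or_lt_of_le hk with he | hlt
      · exact ⟨x, by omega⟩
      · obtain ⟨u, _, hu⟩ := exists_adj_dist G hc hx
        exact ih k (by omega) u hu
  obtain ⟨y, hy⟩ := Infinite.exists_notMem_finset (cover G w n)
  have hny : n ≤ G.dist w y := by
    by_contra hlt
    exact hy (mem_cover G hc w n y (by omega))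
  exact key _ _ hny y rfl

lemma exists_candidates [Infinite V] [G.LocallyFinite] (hc : G.Connected) (w : V) (n : ℕ) :
    ∃ s : Finset V, n + 1 ≤ s.card ∧ ∀ u ∈ s, G.dist w u ≤ n := by
  choose g hg using exists_dist_eq G hc w
  refine ⟨(Finset.range (n+1)).image g, ?_, ?_⟩
  · rw [Finset.card_image_of_injOn, Finset.card_range]
    intro i _ j _ hij
    have : G.dist w (g i) = G.dist w (g j) := by rw [hij]
    rw [hg i, hg j] at this
    exact this
  · intro u hu
    obtain ⟨i, hi, rfl⟩ := Finset.mem_image.mp hu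
    rw [hg i]
    exact Nat.lt_succ_iff.mp (Finset.mem_range.mp hi)

end RoughAux

namespace RoughAux

open SimpleGraph Finset

lemma exists_good_map {V W : Type*} (G : SimpleGraph V) [G.LocallyFinite]
    (D : ℕ) (hD : ∀ v, G.degree v ≤ D) (cand : V → Finset W)
    (hcard : ∀ x, D < (cand x).card) :
    ∃ f : V → W, (∀ x, f x ∈ cand x) ∧ ∀ ⦃x y⦄, G.Adj x y → f x ≠ f y := by
  classical
  set r := (WellOrderingRel : V → V → Prop) with hr
  have iwo : IsWellOrder V r := WellOrderingRel.isWellOrder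
  have key : ∀ (x : V) (t : Finset W), t.card ≤ D → (cand x \ t).Nonempty := by
    intro x t ht
    rw [Finset.nonempty_iff_ne_empty]
    intro he
    have hsub : cand x ⊆ t := by
      rwa [Finset.sdiff_eq_empty_iff_subset] at he
    have := Finset.card_le_card hsub
    have := hcard x
    omega
  have bound : ∀ (x : V) (g : {y // y ∈ (G.neighborFinset x).filter (fun y => r y x)} → W),
      (((G.neighborFinset x).filter (fun y => r y x)).attach.image g).card ≤ D := by
    intro x g
    calc (((G.neighborFinset x).filter (fun y => r y x)).attach.image g).card
        ≤ ((G.neighborFinset x).filter (fun y => r y x)).attach.card := Finset.card_image_le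
      _ = ((G.neighborFinset x).filter (fun y => r y x)).card := Finset.card_attach
      _ ≤ (G.neighborFinset x).card := Finset.card_filter_le _ _
      _ ≤ D := hD x
  let F : ∀ x : V, (∀ y, r y x → W) → W := fun x ih =>
    (key x (((G.neighborFinset x).filter (fun y => r y x)).attach.image
      (fun y => ih y.1 (by have h := y.2; rw [Finset.mem_filter] at h; exact h.2))) (bound x _)).choose
  let f : V → W := (iwo.toIsWellFounded.wf).fix F
  have hfix : ∀ x, f x = F x (fun y _ => f y) := fun x =>
    WellFounded.fix_eq _ F x
  have hmem : ∀ x, f x ∈ cand x \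
      (((G.neighborFinset x).filter (fun y => r y x)).attach.image (fun y => f y.1)) := by
    intro x
    rw [hfix x]
    exact (key x _ (bound x _)).choose_spec
  refine ⟨f, fun x => (Finset.mem_sdiff.mp (hmem x)).1, ?_⟩
  have main : ∀ ⦃x y⦄, G.Adj x y → r y x → f x ≠ f y := by
    intro x y hadj hryx he
    have h2 := (Finset.mem_sdiff.mp (hmem x)).2
    apply h2
    refine Finset.mem_image.mpr ⟨⟨y, ?_⟩, Finset.mem_attach _ _, he.symm⟩
    exact Finset.mem_filter.mpr ⟨(SimpleGraph.mem_neighborFinset _ _ _).mpr hadj, hryx⟩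
  intro x y hadj
  rcases trichotomous_of r x y with h | h | h
  · exact (main hadj.symm h).symm
  · exact absurd h hadj.ne
  · exact main hadj h


end RoughAux

section MainConstr
open SimpleGraph Finset

lemma exists_roughEmbedding {V W : Type*} [Infinite W]
    (G₁ : SimpleGraph V) (G₂ : SimpleGraph W)
    (h₁ : G₁.Connected) (h₂ : G₂.Connected)
    [G₁.LocallyFinite] [G₂.LocallyFinite]
    (D₁ : ℕ) (hD₁ : ∀ v, G₁.degree v ≤ D₁)
    (c₁ : V → V → ℝ≥0∞) (c₂ : W → W → ℝ≥0∞)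
    (M₁ : ℝ≥0∞) (hM₁ : M₁ ≠ ∞) (hc₁ : ∀ x y, G₁.Adj x y → 0 < c₁ x y ∧ c₁ x y ≤ M₁)
    (m₂ : ℝ≥0∞) (hm₂ : 0 < m₂) (hc₂ : ∀ x y, G₂.Adj x y → m₂ ≤ c₂ x y)
    (A B : ℝ) (hA : 0 ≤ A) (hB : 0 ≤ B) (φ : V → W)
    (hup : ∀ x y, (G₂.dist (φ x) (φ y) : ℝ) ≤ A * G₁.dist x y + B)
    (hlow : ∀ x y, (G₁.dist x y : ℝ) ≤ A * G₂.dist (φ x) (φ y) + B) :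
    ∃ (f : V → W) (Φ : ∀ ⦃x y : V⦄, G₁.Adj x y → G₂.Walk (f x) (f y)),
      IsRoughEmbedding G₁ G₂ (fun x y => (c₁ x y)⁻¹) (fun x y => (c₂ x y)⁻¹) f Φ := by
  classical
  set R := D₁ with hRdef
  choose cand hcard hcdist using fun x : V => RoughAux.exists_candidates G₂ h₂ (φ x) R
  obtain ⟨f, hfmem, hfne⟩ := RoughAux.exists_good_map G₁ D₁ hD₁ cand (fun x => by
    have := hcard x; omega)
  have hfdist : ∀ x, G₂.dist (φ x) (f x) ≤ R := fun x => hcdist x _ (hfmem x)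
  set L : ℕ := 2 * R + ⌈A + B⌉₊ with hLdef
  -- distance between images of adjacent vertices
  have hdist_f : ∀ ⦃x y⦄, G₁.Adj x y → G₂.dist (f x) (f y) ≤ L := by
    intro x y h
    have t1 := h₂.dist_triangle (u := f x) (v := φ x) (w := f y)
    have t2 := h₂.dist_triangle (u := φ x) (v := φ y) (w := f y)
    have hc1 : G₂.dist (f x) (φ x) ≤ R := by rw [SimpleGraph.dist_comm]; exact hfdist x
    have hc2 : G₂.dist (φ y) (f y) ≤ R := hfdist y
    have hmid : G₂.dist (φ x) (φ y) ≤ ⌈A + B⌉₊ := by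
      have hd1 : G₁.dist x y ≤ 1 := by
        have := SimpleGraph.dist_le (SimpleGraph.Walk.cons h SimpleGraph.Walk.nil)
        simpa using this
      have hr : (G₂.dist (φ x) (φ y) : ℝ) ≤ (⌈A + B⌉₊ : ℝ) := by
        have ha1 : A * (G₁.dist x y : ℝ) ≤ A := by
          calc A * (G₁.dist x y : ℝ) ≤ A * 1 := by
                refine mul_le_mul_of_nonneg_left ?_ hA
                exact_mod_cast hd1
            _ = A := mul_one A
        have ha2 := hup x y
        have ha3 := Nat.le_ceil (A + B)
        linarith
      exact_mod_cast hr
    omega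
  -- choice of paths
  have hwalk : ∀ ⦃x y⦄ (h : G₁.Adj x y), ∃ q : G₂.Walk (f x) (f y),
      q.IsPath ∧ 0 < q.length ∧ q.length ≤ L := by
    intro x y h
    obtain ⟨p, hp⟩ := h₂.exists_walk_length_eq_dist (f x) (f y)
    refine ⟨p.bypass, SimpleGraph.Walk.bypass_isPath p, ?_, ?_⟩
    · rcases Nat.eq_zero_or_pos p.bypass.length with h0 | h0
      · exact absurd (SimpleGraph.Walk.eq_of_length_eq_zero h0) (hfne h)
      · exact h0
    · exact (SimpleGraph.Walk.length_bypass_le p).trans (by rw [hp]; exact hdist_f h)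
  let pick : ∀ ⦃x y⦄, G₁.Adj x y → G₂.Walk (f x) (f y) := fun x y h => (hwalk h).choose
  have hpick : ∀ ⦃x y⦄ (h : G₁.Adj x y),
      (pick h).IsPath ∧ 0 < (pick h).length ∧ (pick h).length ≤ L :=
    fun x y h => (hwalk h).choose_spec
  let r : V → V → Prop := WellOrderingRel
  let Φ : ∀ ⦃x y : V⦄, G₁.Adj x y → G₂.Walk (f x) (f y) := fun x y h =>
    if r x y then pick h else (pick h.symm).reverse
  have hΦdef : ∀ ⦃x y : V⦄ (h : G₁.Adj x y),
      Φ h = if r x y then pick h else (pick h.symm).reverse := fun _ _ _ => rfl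
  have hΦpath : ∀ ⦃x y⦄ (h : G₁.Adj x y),
      (Φ h).IsPath ∧ 0 < (Φ h).length ∧ (Φ h).length ≤ L := by
    intro x y h
    rw [hΦdef h]
    split_ifs with hr
    · exact hpick h
    · obtain ⟨hp1, hp2, hp3⟩ := hpick h.symm
      exact ⟨hp1.reverse, by simpa using hp2, by simpa using hp3⟩
  have hΦsymm : ∀ ⦃x y⦄ (h : G₁.Adj x y), Φ h.symm = (Φ h).reverse := by
    intro x y h
    rcases trichotomous_of r x y with hr | hr | hr
    · have hnr : ¬ r y x := asymm hr
      rw [hΦdef h.symm, hΦdef h, if_neg hnr, if_pos hr]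
    · exact absurd hr h.ne
    · have hnr : ¬ r x y := asymm hr
      rw [hΦdef h.symm, hΦdef h, if_pos hr, if_neg hnr, SimpleGraph.Walk.reverse_reverse]
  refine ⟨f, Φ, fun x y h => ⟨(hΦpath h).1, (hΦpath h).2.1⟩, hΦsymm, ?_, ?_⟩
  · -- resistance bound
    refine ⟨(L : ℝ≥0∞) * m₂⁻¹ * M₁, ?_, ?_⟩
    · exact ENNReal.mul_ne_top (ENNReal.mul_ne_top (ENNReal.natCast_ne_top L)
        (ENNReal.inv_ne_top.mpr hm₂.ne')) hM₁
    · intro x y h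
      have hsum : pathResistance (fun a b => (c₂ a b)⁻¹) (Φ h) ≤ (L : ℝ≥0∞) * m₂⁻¹ := by
        have hterm : ∀ t ∈ ((Φ h).darts.map (fun d => (c₂ d.toProd.1 d.toProd.2)⁻¹)),
            t ≤ m₂⁻¹ := by
          intro t ht
          obtain ⟨d, _, rfl⟩ := List.mem_map.mp ht
          exact ENNReal.inv_le_inv' (hc₂ _ _ d.adj)
        have := List.sum_le_card_nsmul _ _ hterm
        rw [List.length_map, SimpleGraph.Walk.length_darts] at this
        refine le_trans this ?_
        rw [nsmul_eq_mul]
        exact mul_le_mul_left (Nat.cast_le.mpr (hΦpath h).2.2) _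
      refine hsum.trans ?_
      have h1 : (1 : ℝ≥0∞) ≤ M₁ * (c₁ x y)⁻¹ := by
        have hMne : M₁ ≠ 0 := by
          intro h0
          have := (hc₁ x y h).1
          have := (hc₁ x y h).2
          simp [h0] at this
          exact absurd this (by simpa using (hc₁ x y h).1.ne')
        calc (1 : ℝ≥0∞) = M₁ * M₁⁻¹ := (ENNReal.mul_inv_cancel hMne hM₁).symm
          _ ≤ M₁ * (c₁ x y)⁻¹ := mul_le_mul_right (ENNReal.inv_le_inv' (hc₁ x y h).2) _
      calc (L : ℝ≥0∞) * m₂⁻¹ = (L : ℝ≥0∞) * m₂⁻¹ * 1 := (mul_one _).symm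
        _ ≤ (L : ℝ≥0∞) * m₂⁻¹ * (M₁ * (c₁ x y)⁻¹) := mul_le_mul_right h1 _
        _ = (L : ℝ≥0∞) * m₂⁻¹ * M₁ * (c₁ x y)⁻¹ := (mul_assoc _ _ _).symm
  · -- congestion bound
    set n : ℕ := ⌈A * (2*((L:ℝ)+R)) + B⌉₊ with hndef
    refine ⟨(D₁+1)^n * D₁, ?_⟩
    intro e₂
    induction e₂ using Sym2.ind with
    | _ w₁ w₂ =>
    set S := {pr : V × V | ∃ h : G₁.Adj pr.1 pr.2, s(w₁, w₂) ∈ (Φ h).edges} with hSdef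
    have hSx : ∀ pr ∈ S, G₂.dist (φ pr.1) w₁ ≤ L + R := by
      rintro ⟨x, y⟩ ⟨h, he⟩
      show G₂.dist (φ x) w₁ ≤ L + R
      have hw₁ : w₁ ∈ (Φ h).support := SimpleGraph.Walk.fst_mem_support_of_mem_edges _ he
      have hd : G₂.dist (f x) w₁ ≤ L := by
        refine le_trans (SimpleGraph.dist_le ((Φ h).takeUntil w₁ hw₁)) ?_
        exact le_trans (SimpleGraph.Walk.length_takeUntil_le _ hw₁) (hΦpath h).2.2
      have t1 := h₂.dist_triangle (u := φ x) (v := f x) (w := w₁)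
      have := hfdist x
      omega
    rcases Set.eq_empty_or_nonempty S with hS | ⟨⟨x₀, y₀⟩, hS0⟩
    · rw [hS]
      exact ⟨Set.finite_empty, by simp⟩
    · have hcov : ∀ pr ∈ S, pr.1 ∈ RoughAux.cover G₁ x₀ n := by
        intro pr hpr
        refine RoughAux.mem_cover G₁ h₁ x₀ n pr.1 ?_
        have hd2 : G₂.dist (φ pr.1) (φ x₀) ≤ 2 * (L + R) := by
          have t1 := h₂.dist_triangle (u := φ pr.1) (v := w₁) (w := φ x₀)
          have hx := hSx pr hpr
          have hx₀ := hSx (x₀, y₀) hS0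
          have : G₂.dist w₁ (φ x₀) ≤ L + R := by
            rw [SimpleGraph.dist_comm]; exact hx₀
          omega
        have hr : (G₁.dist x₀ pr.1 : ℝ) ≤ (n : ℝ) := by
          rw [SimpleGraph.dist_comm]
          refine (hlow pr.1 x₀).trans (le_trans ?_ (Nat.le_ceil _))
          refine add_le_add_left ?_ B
          refine mul_le_mul_of_nonneg_left ?_ hA
          calc (G₂.dist (φ pr.1) (φ x₀) : ℝ) ≤ ((2 * (L + R) : ℕ) : ℝ) := by
                exact_mod_cast hd2
            _ = 2*((L:ℝ)+R) := by push_cast; ring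
        exact_mod_cast hr
      set F : Finset (V × V) :=
        (RoughAux.cover G₁ x₀ n).biUnion (fun x => ({x} : Finset V) ×ˢ G₁.neighborFinset x)
        with hFdef
      have hsub : S ⊆ ↑F := by
        rintro ⟨x, y⟩ hpr
        obtain ⟨h, -⟩ := id hpr
        refine Finset.mem_coe.mpr (Finset.mem_biUnion.mpr ⟨x, hcov _ hpr, ?_⟩)
        refine Finset.mem_product.mpr ⟨Finset.mem_singleton_self x, ?_⟩
        exact (SimpleGraph.mem_neighborFinset _ _ _).mpr h
      have hFcard : F.card ≤ (D₁+1)^n * D₁ := by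
        calc F.card ≤ ∑ x ∈ RoughAux.cover G₁ x₀ n,
              (({x} : Finset V) ×ˢ G₁.neighborFinset x).card := Finset.card_biUnion_le
          _ ≤ ∑ _x ∈ RoughAux.cover G₁ x₀ n, D₁ := by
              refine Finset.sum_le_sum (fun x _ => ?_)
              rw [Finset.card_product, Finset.card_singleton, one_mul]
              exact hD₁ x
          _ = (RoughAux.cover G₁ x₀ n).card * D₁ := by
              simp [Finset.sum_const, smul_eq_mul]
          _ ≤ (D₁+1)^n * D₁ := Nat.mul_le_mul_right _ (RoughAux.cover_card G₁ D₁ hD₁ x₀ n)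
      refine ⟨Set.Finite.subset F.finite_toSet hsub, ?_⟩
      refine le_trans (Set.ncard_le_ncard hsub F.finite_toSet) ?_
      rw [Set.ncard_coe_finset]
      exact hFcard

end MainConstr

theorem roughly_isometric_networks_roughly_equivalent
    {V W : Type*} [Infinite V] [Infinite W]
    (G₁ : SimpleGraph V) (G₂ : SimpleGraph W)
    (h₁ : G₁.Connected) (h₂ : G₂.Connected)
    [G₁.LocallyFinite] [G₂.LocallyFinite]
    -- bounded degrees
    (hdeg₁ : ∃ D : ℕ, ∀ v, G₁.degree v ≤ D) (hdeg₂ : ∃ D : ℕ, ∀ w, G₂.degree w ≤ D)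
    (c₁ : V → V → ℝ≥0∞) (c₂ : W → W → ℝ≥0∞)
    (hc₁sym : ∀ x y, c₁ x y = c₁ y x) (hc₂sym : ∀ x y, c₂ x y = c₂ y x)
    (hc₁adj : ∀ x y, 0 < c₁ x y ↔ G₁.Adj x y)
    (hc₂adj : ∀ x y, 0 < c₂ x y ↔ G₂.Adj x y)
    -- c₁, c₂, c₁⁻¹, c₂⁻¹ are all bounded (on edges)
    (hbd₁ : ∃ m M : ℝ≥0∞, 0 < m ∧ M ≠ ∞ ∧ ∀ x y, G₁.Adj x y → m ≤ c₁ x y ∧ c₁ x y ≤ M)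
    (hbd₂ : ∃ m M : ℝ≥0∞, 0 < m ∧ M ≠ ∞ ∧ ∀ x y, G₂.Adj x y → m ≤ c₂ x y ∧ c₂ x y ≤ M)
    -- the two networks are roughly isometric
    (hri : ∃ φ : V → W, IsRoughIsometry G₁ G₂ φ) :
    -- rough embeddings exist in both directions (rough equivalence)
    (∃ (φ : V → W) (Φ : ∀ ⦃x y : V⦄, G₁.Adj x y → G₂.Walk (φ x) (φ y)),
      IsRoughEmbedding G₁ G₂ (fun x y => (c₁ x y)⁻¹) (fun x y => (c₂ x y)⁻¹) φ Φ) ∧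
    (∃ (ψ : W → V) (Ψ : ∀ ⦃x y : W⦄, G₂.Adj x y → G₁.Walk (ψ x) (ψ y)),
      IsRoughEmbedding G₂ G₁ (fun x y => (c₂ x y)⁻¹) (fun x y => (c₁ x y)⁻¹) ψ Ψ) := by
  classical
  obtain ⟨φ, α, hα, β, hβ, hbounds, hcosurj⟩ := hri
  obtain ⟨m₁, M₁, hm₁, hM₁, hb₁⟩ := hbd₁
  obtain ⟨m₂, M₂, hm₂, hM₂, hb₂⟩ := hbd₂
  obtain ⟨D₁, hD₁⟩ := hdeg₁
  obtain ⟨D₂, hD₂⟩ := hdeg₂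
  set B : ℝ := 3 * (α * β + β) with hBdef
  have hB : 0 ≤ B := by positivity
  have hαβB : α * β ≤ B := by nlinarith
  have hβB : β ≤ B := by nlinarith
  have h3αβB : 3 * (α * β) ≤ B := by nlinarith
  have h3βB : 3 * β ≤ B := by nlinarith
  have hαinv : ∀ t s : ℝ, α⁻¹ * t - β ≤ s → t ≤ α * s + α * β := by
    intro t s hts
    have h1 : α⁻¹ * t ≤ s + β := by linarith
    have h2 := mul_le_mul_of_nonneg_left h1 hα.le
    rw [← mul_assoc, mul_inv_cancel₀ (ne_of_gt hα), one_mul] at h2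
    nlinarith
  -- bounds for φ
  have hupφ : ∀ x y, (G₂.dist (φ x) (φ y) : ℝ) ≤ α * G₁.dist x y + B := by
    intro x y
    have := (hbounds x y).2
    linarith
  have hlowφ : ∀ x y, (G₁.dist x y : ℝ) ≤ α * G₂.dist (φ x) (φ y) + B := by
    intro x y
    have := hαinv _ _ (hbounds x y).1
    linarith
  -- quasi-inverse ψ
  choose ψ hψ using hcosurj
  have hupψ : ∀ w w', (G₁.dist (ψ w) (ψ w') : ℝ) ≤ α * G₂.dist w w' + B := by
    intro w w'
    have tri : (G₂.dist (φ (ψ w)) (φ (ψ w')) : ℝ) ≤ G₂.dist w w' + 2 * β := by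
      have t1 := h₂.dist_triangle (u := φ (ψ w)) (v := w) (w := φ (ψ w'))
      have t2 := h₂.dist_triangle (u := w) (v := w') (w := φ (ψ w'))
      have c1 : (G₂.dist (φ (ψ w)) w : ℝ) ≤ β := by
        rw [SimpleGraph.dist_comm]; exact hψ w
      have c2 : (G₂.dist w' (φ (ψ w')) : ℝ) ≤ β := hψ w'
      have t1' : (G₂.dist (φ (ψ w)) (φ (ψ w')) : ℝ) ≤
          G₂.dist (φ (ψ w)) w + G₂.dist w (φ (ψ w')) := by exact_mod_cast t1
      have t2' : (G₂.dist w (φ (ψ w')) : ℝ) ≤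
          G₂.dist w w' + G₂.dist w' (φ (ψ w')) := by exact_mod_cast t2
      linarith
    have h1 := hαinv _ _ (hbounds (ψ w) (ψ w')).1
    have h2 := mul_le_mul_of_nonneg_left tri hα.le
    nlinarith
  have hlowψ : ∀ w w', (G₂.dist w w' : ℝ) ≤ α * G₁.dist (ψ w) (ψ w') + B := by
    intro w w'
    have t1 := h₂.dist_triangle (u := w) (v := φ (ψ w)) (w := w')
    have t2 := h₂.dist_triangle (u := φ (ψ w)) (v := φ (ψ w')) (w := w')
    have t1' : (G₂.dist w w' : ℝ) ≤ G₂.dist w (φ (ψ w)) + G₂.dist (φ (ψ w)) w' := by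
      exact_mod_cast t1
    have t2' : (G₂.dist (φ (ψ w)) w' : ℝ) ≤
        G₂.dist (φ (ψ w)) (φ (ψ w')) + G₂.dist (φ (ψ w')) w' := by exact_mod_cast t2
    have c1 : (G₂.dist w (φ (ψ w)) : ℝ) ≤ β := hψ w
    have c2 : (G₂.dist (φ (ψ w')) w' : ℝ) ≤ β := by
      rw [SimpleGraph.dist_comm]; exact hψ w'
    have hmid := (hbounds (ψ w) (ψ w')).2
    linarith
  constructor
  · exact exists_roughEmbedding G₁ G₂ h₁ h₂ D₁ hD₁ c₁ c₂ M₁ hM₁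
      (fun x y h => ⟨(hc₁adj x y).mpr h, (hb₁ x y h).2⟩) m₂ hm₂
      (fun x y h => (hb₂ x y h).1) α B hα.le hB φ hupφ hlowφ
  · exact exists_roughEmbedding G₂ G₁ h₂ h₁ D₂ hD₂ c₂ c₁ M₂ hM₂
      (fun x y h => ⟨(hc₂adj x y).mpr h, (hb₂ x y h).2⟩) m₁ hm₁
      (fun x y h => (hb₁ x y h).1) α B hα.le hB ψ hupψ hlowψ
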